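/- Let T > 0 and let (u,ρ) be a classical solution of the modified Euler–Poisson system on [0,T)×ℝ that is conservative and satisfies ρ(t,x) ≥ 0 for all (t,x) ∈ [0,T)×ℝ. If there is a nonempty open set Ω ⊆ (0,T)×ℝ on which both u and ρ vanish identically, then ρ(t,x) = 0 for all (t,x) ∈ [0,T)×ℝ and u satisfies the inviscid Burgers equation ∂ₜu + u·∂ₓu = 0 at every point of (0,T)×ℝ. -/

import Mathlib

open MeasureTheory Set

/-- The inverse Helmholtz operator `Λ⁻² = (1 - ∂ₓ²)⁻¹` on the line, given by
convolution with the kernel `e^{-|x|}/2`. -/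
noncomputable def lam2 (w : ℝ → ℝ) (x : ℝ) : ℝ :=
  (1/2) * ∫ y : ℝ, Real.exp (-|x - y|) * w y

/-- A classical solution of the modified Euler-Poisson system in its nonlocal form
`ρₜ + (uρ)ₓ = 0`, `uₜ + u uₓ + ∂ₓΛ⁻²ρ = 0` on `[0,T) × ℝ`: `u` and `ρ` are
continuously differentiable on `(0,T) × ℝ`, `ρ(t,·)` is continuous, bounded and
integrable for each `t`, and the system holds pointwise on `(0,T) × ℝ`. -/
def IsMEPSolution (T : ℝ) (u ρ : ℝ → ℝ → ℝ) : Prop :=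
  ContDiffOn ℝ 1 (fun p : ℝ × ℝ => u p.1 p.2) (Set.Ioo (0:ℝ) T ×ˢ Set.univ) ∧
  ContDiffOn ℝ 1 (fun p : ℝ × ℝ => ρ p.1 p.2) (Set.Ioo (0:ℝ) T ×ˢ Set.univ) ∧
  (∀ t ∈ Set.Ico (0:ℝ) T,
    Continuous (ρ t) ∧ (∃ C : ℝ, ∀ x, |ρ t x| ≤ C) ∧ Integrable (ρ t)) ∧
  (∀ t ∈ Set.Ioo (0:ℝ) T, ∀ x : ℝ,
    deriv (fun s => ρ s x) t + deriv (fun y => u t y * ρ t y) x = 0) ∧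
  (∀ t ∈ Set.Ioo (0:ℝ) T, ∀ x : ℝ,
    deriv (fun s => u s x) t + u t x * deriv (u t) x + deriv (lam2 (ρ t)) x = 0)

/-- The solution is conservative: `H(t) = ∫_ℝ ρ(t,x) dx` is independent of `t`. -/
def IsConservativeMEP (T : ℝ) (ρ : ℝ → ℝ → ℝ) : Prop :=
  ∃ c : ℝ, ∀ t ∈ Set.Ico (0:ℝ) T, (∫ x : ℝ, ρ t x) = c

lemma cont_nonneg_int_zero (f : ℝ → ℝ) (hc : Continuous f) (hi : Integrable f)
    (hnn : ∀ x, 0 ≤ f x) (h0 : (∫ x, f x) = 0) : ∀ x, f x = 0 := by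
  have hae : f =ᵐ[volume] 0 := by
    have := (integral_eq_zero_iff_of_nonneg hnn hi).mp h0
    simpa using this
  have := (hc.ae_eq_iff_eq volume continuous_const).mp hae
  intro x; exact congrFun this x

lemma intA (f : ℝ → ℝ) (hc : Continuous f) (hi : Integrable f) (c : ℝ) :
    IntegrableOn (fun y => Real.exp y * f y) (Iic c) := by
  refine Integrable.mono ((hi.restrict (s := Iic c)).const_mul (Real.exp c))
    ((Real.continuous_exp.mul hc).aestronglyMeasurable.restrict) ?_
  filter_upwards [ae_restrict_mem measurableSet_Iic] with y hy
  simp only [norm_mul, Real.norm_eq_abs, Real.abs_exp]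
  exact mul_le_mul_of_nonneg_right (Real.exp_le_exp.mpr hy) (abs_nonneg _)

lemma intB (f : ℝ → ℝ) (hc : Continuous f) (hi : Integrable f) (c : ℝ) :
    IntegrableOn (fun y => Real.exp (-y) * f y) (Ici c) := by
  refine Integrable.mono ((hi.restrict (s := Ici c)).const_mul (Real.exp (-c)))
    (((Real.continuous_exp.comp continuous_neg).mul hc).aestronglyMeasurable.restrict) ?_
  filter_upwards [ae_restrict_mem measurableSet_Ici] with y hy
  simp only [norm_mul, Real.norm_eq_abs, Real.abs_exp]
  exact mul_le_mul_of_nonneg_right (Real.exp_le_exp.mpr (by simpa using hy)) (abs_nonneg _)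

lemma intK (f : ℝ → ℝ) (hc : Continuous f) (hi : Integrable f) (x : ℝ) :
    Integrable (fun y => Real.exp (-|x - y|) * f y) := by
  refine Integrable.mono hi
    ((Real.continuous_exp.comp ((continuous_const.sub continuous_id).abs.neg)).mul
      hc).aestronglyMeasurable ?_
  filter_upwards with y
  simp only [norm_mul, Real.norm_eq_abs, Real.abs_exp]
  calc Real.exp (-|x - y|) * |f y| ≤ 1 * |f y| :=
        mul_le_mul_of_nonneg_right
          (Real.exp_le_one_iff.mpr (neg_nonpos.mpr (abs_nonneg _))) (abs_nonneg _)
    _ = |f y| := one_mul _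

lemma lam2_eq (f : ℝ → ℝ) (hc : Continuous f) (hi : Integrable f) (x : ℝ) :
    lam2 f x = (1/2) * (Real.exp (-x) * (∫ y in Iic x, Real.exp y * f y)
      + Real.exp x * (∫ y in Ici x, Real.exp (-y) * f y)) := by
  unfold lam2
  congr 1
  rw [← intervalIntegral.integral_Iic_add_Ioi ((intK f hc hi x).integrableOn)
      ((intK f hc hi x).integrableOn)]
  congr 1
  · rw [← integral_const_mul]
    refine setIntegral_congr_fun measurableSet_Iic fun y hy => ?_
    have h : |x - y| = x - y := abs_of_nonneg (by simpa [sub_nonneg] using mem_Iic.mp hy)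
    rw [h, show -(x - y) = -x + y by ring, Real.exp_add]; ring
  · rw [← integral_Ici_eq_integral_Ioi, ← integral_const_mul]
    refine setIntegral_congr_fun measurableSet_Ici fun y hy => ?_
    have h : |x - y| = -(x - y) := abs_of_nonpos (by simpa [sub_nonpos] using mem_Ici.mp hy)
    rw [h, show - -(x - y) = x + -y by ring, Real.exp_add]; ring

lemma hasDerivIic (g : ℝ → ℝ) (hgc : Continuous g)
    (hint : ∀ c : ℝ, IntegrableOn g (Iic c)) (x : ℝ) :
    HasDerivAt (fun b => ∫ y in Iic b, g y) (g x) x := by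
  have key : (fun b => ∫ y in Iic b, g y)
      = fun b => (∫ y in Iic x, g y) + ∫ y in x..b, g y := by
    funext b
    rw [← intervalIntegral.integral_Iic_sub_Iic (hint x) (hint b)]
    ring
  rw [key]
  exact (intervalIntegral.integral_hasDerivAt_right
    (hgc.intervalIntegrable _ _)
    (hgc.stronglyMeasurableAtFilter _ _) hgc.continuousAt).const_add _

lemma integral_Ici_sub_Ici {g : ℝ → ℝ} {a b : ℝ} (ha : IntegrableOn g (Ici a))
    (hb : IntegrableOn g (Ici b)) :
    (∫ x in Ici a, g x) - ∫ x in Ici b, g x = ∫ x in a..b, g x := by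
  wlog hab : a ≤ b generalizing a b
  · rw [← neg_sub, this hb ha (le_of_not_ge hab), intervalIntegral.integral_symm, neg_neg]
  have hdisj : Disjoint (Ico a b) (Ici b) := by
    rw [Set.disjoint_left]; intro z hz hz'; exact absurd hz.2 (not_lt.mpr hz')
  rw [intervalIntegral.integral_of_le hab, ← setIntegral_congr_set Ico_ae_eq_Ioc,
    sub_eq_iff_eq_add, ← setIntegral_union hdisj measurableSet_Ici
      (ha.mono_set (Ico_subset_Ici_self)) hb, Ico_union_Ici_eq_Ici hab]

lemma hasDerivIci (g : ℝ → ℝ) (hgc : Continuous g)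
    (hint : ∀ c : ℝ, IntegrableOn g (Ici c)) (x : ℝ) :
    HasDerivAt (fun b => ∫ y in Ici b, g y) (-g x) x := by
  have key : (fun b => ∫ y in Ici b, g y)
      = fun b => (∫ y in Ici x, g y) - ∫ y in x..b, g y := by
    funext b
    rw [← integral_Ici_sub_Ici (hint x) (hint b)]
    ring
  rw [key]
  exact (intervalIntegral.integral_hasDerivAt_right
    (hgc.intervalIntegrable _ _)
    (hgc.stronglyMeasurableAtFilter _ _) hgc.continuousAt).const_sub _

lemma lam2_hasDeriv (f : ℝ → ℝ) (hc : Continuous f) (hi : Integrable f) (x : ℝ) :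
    HasDerivAt (lam2 f)
      ((1/2) * (Real.exp x * (∫ y in Ici x, Real.exp (-y) * f y)
        - Real.exp (-x) * (∫ y in Iic x, Real.exp y * f y))) x := by
  have hA := hasDerivIic (fun y => Real.exp y * f y) (Real.continuous_exp.mul hc)
    (intA f hc hi)
  have hB := hasDerivIci (fun y => Real.exp (-y) * f y)
    ((Real.continuous_exp.comp continuous_neg).mul hc) (intB f hc hi)
  have hexp : ∀ z : ℝ, HasDerivAt (fun b : ℝ => Real.exp (-b)) (-Real.exp (-z)) z := by
    intro z
    simpa [Function.comp_def] using (Real.hasDerivAt_exp (-z)).comp z (hasDerivAt_neg z)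
  have hrep : lam2 f = fun b => (1/2) * (Real.exp (-b) * (∫ y in Iic b, Real.exp y * f y)
      + Real.exp b * (∫ y in Ici b, Real.exp (-y) * f y)) :=
    funext fun b => lam2_eq f hc hi b
  rw [hrep]
  have h := ((((hexp x).mul (hA x)).add ((Real.hasDerivAt_exp x).mul (hB x))).const_mul (1/2 : ℝ))
  refine h.congr_deriv (Eq.symm ?_)
  have hme : Real.exp (-x) * Real.exp x = 1 := by
    rw [← Real.exp_add]; simp
  ring

lemma key_vanish (f : ℝ → ℝ) (hc : Continuous f) (hi : Integrable f) (hnn : ∀ y, 0 ≤ f y)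
    (x₀ r : ℝ) (hr : 0 < r)
    (hf0 : ∀ x ∈ Metric.ball x₀ r, f x = 0)
    (hd0 : ∀ x ∈ Metric.ball x₀ r, deriv (lam2 f) x = 0) :
    ∀ y, f y = 0 := by
  set A : ℝ → ℝ := fun b => ∫ y in Iic b, Real.exp y * f y with hAdef
  set B : ℝ → ℝ := fun b => ∫ y in Ici b, Real.exp (-y) * f y with hBdef
  set ψ : ℝ → ℝ := fun b => Real.exp b * B b - Real.exp (-b) * A b with hψdef
  have hψ0 : ∀ x ∈ Metric.ball x₀ r, ψ x = 0 := by
    intro x hx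
    have hD := (lam2_hasDeriv f hc hi x).deriv
    rw [hd0 x hx] at hD
    simp only [hψdef, hAdef, hBdef]
    linarith [hD]
  have hev : ψ =ᶠ[nhds x₀] fun _ => 0 := by
    filter_upwards [Metric.ball_mem_nhds x₀ hr] with x hx using hψ0 x hx
  have hA := hasDerivIic (fun y => Real.exp y * f y) (Real.continuous_exp.mul hc)
    (intA f hc hi) x₀
  have hB := hasDerivIci (fun y => Real.exp (-y) * f y)
    ((Real.continuous_exp.comp continuous_neg).mul hc) (intB f hc hi) x₀
  have hexp : HasDerivAt (fun b : ℝ => Real.exp (-b)) (-Real.exp (-x₀)) x₀ := by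
    simpa [Function.comp_def] using (Real.hasDerivAt_exp (-x₀)).comp x₀ (hasDerivAt_neg x₀)
  have hme : Real.exp (-x₀) * Real.exp x₀ = 1 := by rw [← Real.exp_add]; simp
  have hψd : HasDerivAt ψ
      (Real.exp x₀ * B x₀ + Real.exp (-x₀) * A x₀ - 2 * f x₀) x₀ := by
    have h := ((Real.hasDerivAt_exp x₀).mul hB).sub (hexp.mul hA)
    refine h.congr_deriv (Eq.symm ?_)
    linear_combination (2 * f x₀) * hme
  have hψd0 : HasDerivAt ψ 0 x₀ :=
    (hasDerivAt_const x₀ (0:ℝ)).congr_of_eventuallyEq hev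
  have huniq := hψd.unique hψd0
  have hfx₀ : f x₀ = 0 := hf0 x₀ (Metric.mem_ball_self hr)
  have hBnn : 0 ≤ B x₀ :=
    setIntegral_nonneg measurableSet_Ici fun y _ => mul_nonneg (Real.exp_pos _).le (hnn y)
  have hAnn : 0 ≤ A x₀ :=
    setIntegral_nonneg measurableSet_Iic fun y _ => mul_nonneg (Real.exp_pos _).le (hnn y)
  have hlam : lam2 f x₀ = 0 := by
    rw [lam2_eq f hc hi x₀]
    have h1 : Real.exp x₀ * B x₀ + Real.exp (-x₀) * A x₀ = 0 := by
      rw [hfx₀] at huniq; linarith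
    have h2 : Real.exp x₀ * B x₀ = 0 ∧ Real.exp (-x₀) * A x₀ = 0 := by
      constructor <;> nlinarith [mul_nonneg (Real.exp_pos x₀).le hBnn,
        mul_nonneg (Real.exp_pos (-x₀)).le hAnn]
    rw [hAdef, hBdef] at h2
    rw [h2.1, h2.2]; ring
  have hint0 : (∫ y, Real.exp (-|x₀ - y|) * f y) = 0 := by
    unfold lam2 at hlam; linarith
  have hker := cont_nonneg_int_zero (fun y => Real.exp (-|x₀ - y|) * f y)
    ((Real.continuous_exp.comp ((continuous_const.sub continuous_id).abs.neg)).mul hc)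
    (intK f hc hi x₀) (fun y => mul_nonneg (Real.exp_pos _).le (hnn y)) hint0
  intro y
  exact (mul_eq_zero.mp (hker y)).resolve_left (ne_of_gt (Real.exp_pos _))

/-- **Theorem 5.1 (unique continuation for the modified Euler-Poisson system).**
If a conservative classical solution `(u,ρ)` with `ρ ≥ 0` vanishes on a nonempty
open set `Ω ⊆ (0,T) × ℝ`, then `ρ ≡ 0` and `u` solves the inviscid Burgers
equation `uₜ + u uₓ = 0`. -/
theorem modifiedEulerPoisson_unique_continuation (T : ℝ) (hT : 0 < T)
    (u ρ : ℝ → ℝ → ℝ) (hsol : IsMEPSolution T u ρ)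
    (hcons : IsConservativeMEP T ρ)
    (hρnn : ∀ t ∈ Set.Ico (0:ℝ) T, ∀ x : ℝ, 0 ≤ ρ t x)
    (Ω : Set (ℝ × ℝ)) (hΩopen : IsOpen Ω) (hΩne : Ω.Nonempty)
    (hΩsub : Ω ⊆ Set.Ioo (0:ℝ) T ×ˢ Set.univ)
    (hvanu : ∀ p ∈ Ω, u p.1 p.2 = 0)
    (hvanρ : ∀ p ∈ Ω, ρ p.1 p.2 = 0) :
    (∀ t ∈ Set.Ico (0:ℝ) T, ∀ x : ℝ, ρ t x = 0) ∧
    (∀ t ∈ Set.Ioo (0:ℝ) T, ∀ x : ℝ,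
      deriv (fun s => u s x) t + u t x * deriv (u t) x = 0) := by
  obtain ⟨hu1, hρ1, hreg, hmass, hmom⟩ := hsol
  obtain ⟨c, hcval⟩ := hcons
  obtain ⟨⟨t₀, x₀⟩, hp₀⟩ := hΩne
  have ht₀ : t₀ ∈ Ioo (0:ℝ) T := (hΩsub hp₀).1
  have ht₀' : t₀ ∈ Ico (0:ℝ) T := ⟨ht₀.1.le, ht₀.2⟩
  obtain ⟨r, hr, hball⟩ := Metric.isOpen_iff.mp hΩopen _ hp₀
  obtain ⟨hρcont, -, hρint⟩ := hreg t₀ ht₀'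
  have hmem : ∀ x ∈ Metric.ball x₀ r, ((t₀ : ℝ), x) ∈ Ω := by
    intro x hx
    apply hball
    rw [Metric.mem_ball, Prod.dist_eq]
    simp only [dist_self]
    exact max_lt hr (Metric.mem_ball.mp hx)
  have hf0 : ∀ x ∈ Metric.ball x₀ r, ρ t₀ x = 0 := fun x hx => hvanρ _ (hmem x hx)
  have hd0 : ∀ x ∈ Metric.ball x₀ r, deriv (lam2 (ρ t₀)) x = 0 := by
    intro x hx
    have hmom' := hmom t₀ ht₀ x
    have hε : 0 < r - dist x x₀ := by
      have := Metric.mem_ball.mp hx; linarith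
    have hev : (fun s => u s x) =ᶠ[nhds t₀] fun _ => 0 := by
      filter_upwards [Metric.ball_mem_nhds t₀ hε] with s hs
      apply hvanu (s, x)
      apply hball
      rw [Metric.mem_ball, Prod.dist_eq]
      have h1 : dist s t₀ < r - dist x x₀ := Metric.mem_ball.mp hs
      have h2 : dist x x₀ < r := Metric.mem_ball.mp hx
      exact max_lt (by linarith [dist_nonneg (x := x) (y := x₀)]) h2
    have h1 : deriv (fun s => u s x) t₀ = 0 := by
      rw [hev.deriv_eq]; exact deriv_const _ _
    have h2 : u t₀ x = 0 := hvanu _ (hmem x hx)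
    rw [h1, h2] at hmom'
    linarith
  have hρt₀ : ∀ y, ρ t₀ y = 0 :=
    key_vanish (ρ t₀) hρcont hρint (hρnn t₀ ht₀') x₀ r hr hf0 hd0
  have hc0 : c = 0 := by
    rw [← hcval t₀ ht₀']
    simp [hρt₀]
  have hρzero : ∀ t ∈ Ico (0:ℝ) T, ∀ x : ℝ, ρ t x = 0 := by
    intro t ht
    obtain ⟨hcont, -, hint⟩ := hreg t ht
    exact cont_nonneg_int_zero _ hcont hint (hρnn t ht) (by rw [hcval t ht, hc0])
  refine ⟨hρzero, ?_⟩
  intro t ht x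
  have hmom' := hmom t ht x
  have hz : ∀ y, ρ t y = 0 := hρzero t ⟨ht.1.le, ht.2⟩
  have hlz : lam2 (ρ t) = fun _ => 0 := funext fun z => by simp [lam2, hz]
  rw [hlz] at hmom'
  simpa using hmom'
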